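/- Let n ≥ 0 and let S₁, S₂ ⊆ 𝔽₂^{2n} be subspaces. Define P_A := (1/|A|) Σ_{x ∈ A} W_x ⊗ conj(W_x) for a subspace A ⊆ 𝔽₂^{2n}. Then P_{S₁} · P_{S₂} = P_{S₁+S₂}, where S₁ + S₂ = {s₁ + s₂ : s₁ ∈ S₁, s₂ ∈ S₂}. In particular, P_{S₁} and P_{S₂} commute. -/

import Mathlib

open Kronecker

/-- The field with two elements. -/
abbrev F2 := ZMod 2

/-- The phase space `V = 𝔽₂ⁿ × 𝔽₂ⁿ`. -/
abbrev V (n : ℕ) : Type := (Fin n → F2) × (Fin n → F2)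

/-- The Weyl operator `W_v` with entries
`(W_v)_{x,y} = i^{vₓ·v_z} (−1)^{v_z·y} 1{x = y + vₓ}`. -/
noncomputable def Weyl {n : ℕ} (v : V n) : Matrix (Fin n → F2) (Fin n → F2) ℂ :=
  fun x y =>
    Complex.I ^ (∑ i, (v.1 i).val * (v.2 i).val) *
      (-1 : ℂ) ^ (∑ i, (v.2 i) * (y i)).val *
      (if x = y + v.1 then 1 else 0)

/-- `P_A = (1/|A|) Σ_{x ∈ A} W_x ⊗ conj(W_x)`. -/
noncomputable def projMat {n : ℕ} (A : Submodule F2 (V n)) :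
    Matrix ((Fin n → F2) × (Fin n → F2)) ((Fin n → F2) × (Fin n → F2)) ℂ :=
  (Nat.card A : ℂ)⁻¹ •
    ∑ᶠ x ∈ (A : Set (V n)), (Weyl x) ⊗ₖ ((Weyl x).map (starRingEnd ℂ))

noncomputable def T {n : ℕ} (v : V n) :
    Matrix ((Fin n → F2) × (Fin n → F2)) ((Fin n → F2) × (Fin n → F2)) ℂ :=
  (Weyl v) ⊗ₖ ((Weyl v).map (starRingEnd ℂ))

def χ (a : F2) : ℂ := (-1 : ℂ) ^ a.val

lemma χ_add (a b : F2) : χ (a + b) = χ a * χ b := by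
  have h0 : ((0:F2)).val = 0 := rfl
  have h1 : ((1:F2)).val = 1 := rfl
  have h2 : ((1:F2)+1).val = 0 := rfl
  rcases (by decide : ∀ x : F2, x = 0 ∨ x = 1) a with rfl | rfl <;>
    rcases (by decide : ∀ x : F2, x = 0 ∨ x = 1) b with rfl | rfl <;> simp [χ, h0, h1, h2]

lemma χ_sq (a : F2) : χ a * χ a = 1 := by
  have h0 : ((0:F2)).val = 0 := rfl
  have h1 : ((1:F2)).val = 1 := rfl
  fin_cases a <;> simp [χ, h0, h1] <;> norm_num [ZMod.val]

lemma vadd_self {n : ℕ} (x : V n) : x + x = 0 := by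
  have h : (2 : ZMod 2) • x = 0 := by
    have : (2 : ZMod 2) = 0 := rfl
    simp [this]
  simpa [two_smul] using h

lemma T_apply {n : ℕ} (u : V n) (x x' y y' : Fin n → F2) :
    T u (x, x') (y, y') =
      χ (∑ i, (u.2 i) * (y i)) * χ (∑ i, (u.2 i) * (y' i)) *
        ((if x = y + u.1 then 1 else 0) * (if x' = y' + u.1 then 1 else 0)) := by
  have hI : Complex.I ^ (∑ i, (u.1 i).val * (u.2 i).val) *
      (-Complex.I) ^ (∑ i, (u.1 i).val * (u.2 i).val) = 1 := by
    rw [← mul_pow, mul_neg, Complex.I_mul_I, neg_neg, one_pow]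
  by_cases h1 : x = y + u.1 <;> by_cases h2 : x' = y' + u.1 <;>
    simp only [T, Matrix.kroneckerMap_apply, Matrix.map_apply, Weyl, map_mul, map_pow,
      Complex.conj_I, map_neg, map_one, map_zero, apply_ite (starRingEnd ℂ), h1, h2,
      if_true, if_false, χ, mul_one, mul_zero, zero_mul, one_mul]
  linear_combination ((-1:ℂ) ^ (∑ i, (u.2 i) * (y i)).val *
    (-1:ℂ) ^ (∑ i, (u.2 i) * (y' i)).val) * hI


lemma dot_add_right {n : ℕ} (a b c : Fin n → F2) :
    (∑ i, a i * (b i + c i)) = (∑ i, a i * b i) + (∑ i, a i * c i) := by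
  rw [← Finset.sum_add_distrib]; exact Finset.sum_congr rfl fun i _ => mul_add _ _ _

lemma dot_add_left {n : ℕ} (a b c : Fin n → F2) :
    (∑ i, (a i + b i) * c i) = (∑ i, a i * c i) + (∑ i, b i * c i) := by
  rw [← Finset.sum_add_distrib]; exact Finset.sum_congr rfl fun i _ => add_mul _ _ _

lemma T_mul {n : ℕ} (u v : V n) : T u * T v = T (u + v) := by
  ext ⟨x, x'⟩ ⟨z, z'⟩
  rw [Matrix.mul_apply]
  rw [Fintype.sum_prod_type]
  rw [Finset.sum_eq_single (z + v.1)]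
  · rw [Finset.sum_eq_single (z' + v.1)]
    · rw [T_apply, T_apply, T_apply]
      simp only [if_pos rfl, if_true, Prod.fst_add, Prod.snd_add, Pi.add_apply]
      rw [dot_add_right u.2 z v.1, dot_add_right u.2 z' v.1, dot_add_left u.2 v.2 z,
        dot_add_left u.2 v.2 z', χ_add, χ_add, χ_add, χ_add]
      rw [show z + v.1 + u.1 = z + (u.1 + v.1) by rw [add_assoc, add_comm v.1 u.1],
        show z' + v.1 + u.1 = z' + (u.1 + v.1) by rw [add_assoc, add_comm v.1 u.1]]
      have := χ_sq (∑ i, u.2 i * v.1 i)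
      linear_combination ((if x = z + (u.1 + v.1) then (1:ℂ) else 0) *
        (if x' = z' + (u.1 + v.1) then (1:ℂ) else 0) * χ (∑ i, u.2 i * z i) *
        χ (∑ i, u.2 i * z' i) * χ (∑ i, v.2 i * z i) * χ (∑ i, v.2 i * z' i)) * this
    · intro y' _ hy'
      rw [T_apply, T_apply]
      simp [hy']
    · intro h; exact absurd (Finset.mem_univ _) h
  · intro y _ hy
    refine Finset.sum_eq_zero fun y' _ => ?_
    rw [T_apply, T_apply]
    simp [hy]
  · intro h; exact absurd (Finset.mem_univ _) h

lemma fiber_card {n : ℕ} (S₁ S₂ : Submodule F2 (V n)) (F₁ F₂ Fi : Finset (V n))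
    (h₁ : ∀ x, x ∈ F₁ ↔ x ∈ S₁) (h₂ : ∀ x, x ∈ F₂ ↔ x ∈ S₂)
    (hi : ∀ x, x ∈ Fi ↔ x ∈ S₁ ⊓ S₂) (w : V n) (hw : w ∈ S₁ ⊔ S₂) :
    ((F₁ ×ˢ F₂).filter fun p => p.1 + p.2 = w).card = Fi.card := by
  obtain ⟨a, ha, b, hb, hab⟩ := Submodule.mem_sup.mp hw
  refine Finset.card_bij' (fun p _ => a + p.1) (fun t _ => (a + t, b + t)) ?_ ?_ ?_ ?_
  · rintro ⟨p1, p2⟩ hp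
    rw [Finset.mem_filter, Finset.mem_product] at hp
    obtain ⟨⟨hp1, hp2⟩, hsum⟩ := hp
    rw [hi, Submodule.mem_inf]
    constructor
    · exact S₁.add_mem ha ((h₁ p1).mp hp1)
    · have key : a + p1 = b + p2 := by
        have h0 : (a + p1) + (b + p2) = 0 := by
          have : (a + p1) + (b + p2) = (a + b) + (p1 + p2) := by abel
          rw [this, hab, hsum, vadd_self]
        calc a + p1 = (a + p1) + ((b + p2) + (b + p2)) := by rw [vadd_self]; abel
          _ = ((a + p1) + (b + p2)) + (b + p2) := by abel
          _ = b + p2 := by rw [h0, zero_add]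
      show a + p1 ∈ S₂
      rw [key]
      exact S₂.add_mem hb ((h₂ p2).mp hp2)
  · intro t ht
    rw [hi, Submodule.mem_inf] at ht
    rw [Finset.mem_filter, Finset.mem_product]
    refine ⟨⟨(h₁ _).mpr (S₁.add_mem ha ht.1), (h₂ _).mpr (S₂.add_mem hb ht.2)⟩, ?_⟩
    calc (a + t) + (b + t) = (a + b) + (t + t) := by abel
      _ = w := by rw [vadd_self, hab, add_zero]
  · rintro ⟨p1, p2⟩ hp
    rw [Finset.mem_filter, Finset.mem_product] at hp
    have h1 : a + (a + p1) = p1 := by rw [← add_assoc, vadd_self, zero_add]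
    have h2 : b + (a + p1) = p2 := by
      have hsum := hp.2
      calc b + (a + p1) = (a + b) + p1 := by abel
        _ = (p1 + p2) + p1 := by rw [hab, hsum]
        _ = p2 + (p1 + p1) := by abel
        _ = p2 := by rw [vadd_self, add_zero]
    simp [h1, h2]
  · intro t _
    show a + (a + t) = t
    rw [← add_assoc, vadd_self, zero_add]

lemma key_sum {n : ℕ} (S₁ S₂ : Submodule F2 (V n)) (F₁ F₂ Fu Fi : Finset (V n))
    (h₁ : ∀ x, x ∈ F₁ ↔ x ∈ S₁) (h₂ : ∀ x, x ∈ F₂ ↔ x ∈ S₂)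
    (hu : ∀ x, x ∈ Fu ↔ x ∈ S₁ ⊔ S₂) (hi : ∀ x, x ∈ Fi ↔ x ∈ S₁ ⊓ S₂) :
    (∑ u ∈ F₁, T u) * (∑ v ∈ F₂, T v) = Fi.card • ∑ w ∈ Fu, T w := by
  have hmaps : ∀ p ∈ F₁ ×ˢ F₂, p.1 + p.2 ∈ Fu := by
    rintro ⟨p1, p2⟩ hp
    rw [Finset.mem_product] at hp
    exact (hu _).mpr (Submodule.add_mem_sup ((h₁ _).mp hp.1) ((h₂ _).mp hp.2))
  rw [Finset.sum_mul_sum, ← Finset.sum_product']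
  rw [← Finset.sum_fiberwise_of_maps_to hmaps (fun p => T p.1 * T p.2)]
  rw [Finset.smul_sum]
  refine Finset.sum_congr rfl fun w hw => ?_
  have : ∀ p ∈ (F₁ ×ˢ F₂).filter fun p => p.1 + p.2 = w, T p.1 * T p.2 = T w := by
    rintro ⟨p1, p2⟩ hp
    rw [Finset.mem_filter] at hp
    rw [T_mul, hp.2]
  rw [Finset.sum_congr rfl this, Finset.sum_const,
    fiber_card S₁ S₂ F₁ F₂ Fi h₁ h₂ hi w ((hu w).mp hw)]

lemma card_mul_card {n : ℕ} (S₁ S₂ : Submodule F2 (V n)) (F₁ F₂ Fu Fi : Finset (V n))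
    (h₁ : ∀ x, x ∈ F₁ ↔ x ∈ S₁) (h₂ : ∀ x, x ∈ F₂ ↔ x ∈ S₂)
    (hu : ∀ x, x ∈ Fu ↔ x ∈ S₁ ⊔ S₂) (hi : ∀ x, x ∈ Fi ↔ x ∈ S₁ ⊓ S₂) :
    F₁.card * F₂.card = Fu.card * Fi.card := by
  have hmaps : ∀ p ∈ F₁ ×ˢ F₂, p.1 + p.2 ∈ Fu := by
    rintro ⟨p1, p2⟩ hp
    rw [Finset.mem_product] at hp
    exact (hu _).mpr (Submodule.add_mem_sup ((h₁ _).mp hp.1) ((h₂ _).mp hp.2))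
  rw [← Finset.card_product, Finset.card_eq_sum_card_fiberwise hmaps]
  rw [Finset.sum_congr rfl fun w hw => fiber_card S₁ S₂ F₁ F₂ Fi h₁ h₂ hi w ((hu w).mp hw)]
  rw [Finset.sum_const, smul_eq_mul]


lemma projMat_eq {n : ℕ} (A : Submodule F2 (V n)) (hA : (A : Set (V n)).Finite) :
    projMat A = ((hA.toFinset.card : ℂ))⁻¹ • ∑ x ∈ hA.toFinset, T x := by
  rw [projMat, finsum_mem_eq_finite_toFinset_sum _ hA]
  have hc : Nat.card A = hA.toFinset.card := by
    have h1 : Nat.card A = Nat.card (A : Set (V n)) := rfl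
    rw [h1, Nat.card_coe_set_eq, Set.ncard_eq_toFinset_card _ hA]
  rw [hc]
  rfl

lemma main_eq {n : ℕ} (S₁ S₂ : Submodule F2 (V n)) :
    projMat S₁ * projMat S₂ = projMat (S₁ ⊔ S₂) := by
  have hf₁ : ((S₁ : Set (V n))).Finite := Set.toFinite _
  have hf₂ : ((S₂ : Set (V n))).Finite := Set.toFinite _
  have hfu : (((S₁ ⊔ S₂ : Submodule F2 (V n)) : Set (V n))).Finite := Set.toFinite _
  have hfi : (((S₁ ⊓ S₂ : Submodule F2 (V n)) : Set (V n))).Finite := Set.toFinite _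
  have m₁ : ∀ x, x ∈ hf₁.toFinset ↔ x ∈ S₁ := fun x => by simp [Set.Finite.mem_toFinset]
  have m₂ : ∀ x, x ∈ hf₂.toFinset ↔ x ∈ S₂ := fun x => by simp [Set.Finite.mem_toFinset]
  have mu : ∀ x, x ∈ hfu.toFinset ↔ x ∈ S₁ ⊔ S₂ := fun x => by simp [Set.Finite.mem_toFinset]
  have mi : ∀ x, x ∈ hfi.toFinset ↔ x ∈ S₁ ⊓ S₂ := fun x => by simp [Set.Finite.mem_toFinset]
  rw [projMat_eq S₁ hf₁, projMat_eq S₂ hf₂, projMat_eq _ hfu]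
  rw [smul_mul_smul_comm]
  rw [key_sum S₁ S₂ _ _ _ _ m₁ m₂ mu mi]
  rw [← Nat.cast_smul_eq_nsmul ℂ, smul_smul]
  congr 1
  have hcard := card_mul_card S₁ S₂ _ _ _ _ m₁ m₂ mu mi
  have hnz₁ : (hf₁.toFinset.card : ℂ) ≠ 0 := by
    simp only [ne_eq, Nat.cast_eq_zero]
    exact Finset.card_ne_zero_of_mem ((m₁ 0).mpr S₁.zero_mem)
  have hnz₂ : (hf₂.toFinset.card : ℂ) ≠ 0 := by
    simp only [ne_eq, Nat.cast_eq_zero]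
    exact Finset.card_ne_zero_of_mem ((m₂ 0).mpr S₂.zero_mem)
  have hnzu : (hfu.toFinset.card : ℂ) ≠ 0 := by
    simp only [ne_eq, Nat.cast_eq_zero]
    exact Finset.card_ne_zero_of_mem ((mu 0).mpr (S₁ ⊔ S₂).zero_mem)
  have hdiv : (hfi.toFinset.card : ℂ)
      = (hf₁.toFinset.card : ℂ) * (hf₂.toFinset.card : ℂ) / (hfu.toFinset.card : ℂ) := by
    rw [eq_div_iff hnzu]
    exact_mod_cast (by rw [hcard]; ring :
      hf₁.toFinset.card * hf₂.toFinset.card = hfi.toFinset.card * hfu.toFinset.card).symm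
  rw [hdiv, div_eq_mul_inv,
    show ((hf₁.toFinset.card : ℂ))⁻¹ * ((hf₂.toFinset.card : ℂ))⁻¹ *
        ((hf₁.toFinset.card : ℂ) * (hf₂.toFinset.card : ℂ) * ((hfu.toFinset.card : ℂ))⁻¹)
      = (((hf₁.toFinset.card : ℂ))⁻¹ * (hf₁.toFinset.card : ℂ)) *
        ((((hf₂.toFinset.card : ℂ))⁻¹ * (hf₂.toFinset.card : ℂ)) *
          ((hfu.toFinset.card : ℂ))⁻¹) from by ring,
    inv_mul_cancel₀ hnz₁, inv_mul_cancel₀ hnz₂, one_mul, one_mul]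

/-- For subspaces `S₁, S₂ ⊆ 𝔽₂^{2n}`, one has `P_{S₁} P_{S₂} = P_{S₁+S₂}`; in
particular `P_{S₁}` and `P_{S₂}` commute. -/
theorem stmt16 (n : ℕ) (S₁ S₂ : Submodule F2 (V n)) :
    projMat S₁ * projMat S₂ = projMat (S₁ ⊔ S₂)
      ∧ projMat S₁ * projMat S₂ = projMat S₂ * projMat S₁ := by
  exact ⟨main_eq S₁ S₂, by rw [main_eq, main_eq, sup_comm]⟩
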